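/- Let E be a real normed vector space, β ∈ [0,1), and let g_0, …, g_T ∈ E and δ_{−1} = 0, δ_0, …, δ_T ∈ E. If m_t = (1−β) Σ_{s=0}^t β^{t−s} g_s + Σ_{s=0}^t β^{t−s} (δ_{s−1} − δ_s) for every 0 ≤ t ≤ T, then Σ_{t=0}^T ‖m_t‖² ≤ 2 Σ_{t=0}^T ‖g_t‖² + (8/(1−β)²) Σ_{t=0}^T ‖δ_t‖². -/

import Mathlib

open Finset

private lemma geom_bound {β : ℝ} (hβ0 : 0 ≤ β) (hβ1 : β < 1) (n : ℕ) :
    ∑ k ∈ range n, β ^ k ≤ 1 / (1 - β) := by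
  have h1 : (0:ℝ) < 1 - β := by linarith
  rw [geom_sum_eq (ne_of_lt hβ1)]
  have hrw : (β ^ n - 1) / (β - 1) = (1 - β ^ n) / (1 - β) := by
    rw [← neg_sub 1 (β ^ n), ← neg_sub 1 β, neg_div_neg_eq]
  rw [hrw]
  have : (0:ℝ) ≤ β ^ n := pow_nonneg hβ0 n
  gcongr
  linarith

private lemma seq_lemma {β : ℝ} (hβ0 : 0 ≤ β) (hβ1 : β < 1) (T : ℕ)
    (a : ℕ → ℝ) (ha : ∀ s, 0 ≤ a s) :
    ∑ t ∈ range (T + 1), (∑ s ∈ range (t + 1), β ^ (t - s) * a s) ^ 2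
      ≤ (1 / (1 - β)) ^ 2 * ∑ t ∈ range (T + 1), a t ^ 2 := by
  have h1 : (0:ℝ) < 1 - β := by linarith
  have hc : (0:ℝ) ≤ 1 / (1 - β) := by positivity
  have step1 : ∀ t, (∑ s ∈ range (t + 1), β ^ (t - s) * a s) ^ 2
      ≤ (1 / (1 - β)) * ∑ s ∈ range (t + 1), β ^ (t - s) * a s ^ 2 := by
    intro t
    have hcs := sum_mul_sq_le_sq_mul_sq (range (t + 1))
      (fun s => Real.sqrt (β ^ (t - s))) (fun s => Real.sqrt (β ^ (t - s)) * a s)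
    have hrw : ∀ s ∈ range (t+1),
        Real.sqrt (β ^ (t - s)) * (Real.sqrt (β ^ (t - s)) * a s) = β ^ (t - s) * a s := by
      intro s _
      rw [← mul_assoc, Real.mul_self_sqrt (pow_nonneg hβ0 _)]
    have hrw2 : ∀ s ∈ range (t+1), (Real.sqrt (β ^ (t - s))) ^ 2 = β ^ (t - s) := by
      intro s _; exact Real.sq_sqrt (pow_nonneg hβ0 _)
    have hrw3 : ∀ s ∈ range (t+1),
        (Real.sqrt (β ^ (t - s)) * a s) ^ 2 = β ^ (t - s) * a s ^ 2 := by
      intro s _; rw [mul_pow, Real.sq_sqrt (pow_nonneg hβ0 _)]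
    rw [sum_congr rfl hrw, sum_congr rfl hrw2, sum_congr rfl hrw3] at hcs
    have hg : ∑ s ∈ range (t + 1), β ^ (t - s) ≤ 1 / (1 - β) := by
      have hrefl := Finset.sum_range_reflect (fun k => β ^ k) (t+1)
      simp only [Nat.add_sub_cancel] at hrefl
      rw [hrefl]
      exact geom_bound hβ0 hβ1 (t+1)
    calc (∑ s ∈ range (t + 1), β ^ (t - s) * a s) ^ 2
        ≤ (∑ s ∈ range (t + 1), β ^ (t - s)) * ∑ s ∈ range (t + 1), β ^ (t - s) * a s ^ 2 := hcs
      _ ≤ (1 / (1 - β)) * ∑ s ∈ range (t + 1), β ^ (t - s) * a s ^ 2 := by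
          apply mul_le_mul_of_nonneg_right hg
          apply sum_nonneg; intro s _; positivity
  calc ∑ t ∈ range (T + 1), (∑ s ∈ range (t + 1), β ^ (t - s) * a s) ^ 2
      ≤ ∑ t ∈ range (T + 1), (1 / (1 - β)) * ∑ s ∈ range (t + 1), β ^ (t - s) * a s ^ 2 := by
        exact sum_le_sum fun t _ => step1 t
    _ = (1 / (1 - β)) * ∑ t ∈ range (T + 1), ∑ s ∈ range (t + 1), β ^ (t - s) * a s ^ 2 := by
        rw [mul_sum]
    _ = (1 / (1 - β)) * ∑ s ∈ range (T + 1), ∑ t ∈ Ico s (T + 1), β ^ (t - s) * a s ^ 2 := by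
        congr 1
        have hsw := sum_Ico_Ico_comm 0 (T+1) (fun s t => β ^ (t - s) * a s ^ 2)
        simp only [Nat.Ico_zero_eq_range] at hsw
        exact hsw.symm
    _ ≤ (1 / (1 - β)) * ∑ s ∈ range (T + 1), (1 / (1 - β)) * a s ^ 2 := by
        apply mul_le_mul_of_nonneg_left _ hc
        apply sum_le_sum; intro s _
        rw [← sum_mul]
        apply mul_le_mul_of_nonneg_right _ (sq_nonneg _)
        calc ∑ t ∈ Ico s (T+1), β ^ (t - s) = ∑ k ∈ range (T + 1 - s), β ^ k := by
              rw [Finset.sum_Ico_eq_sum_range]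
              apply sum_congr rfl; intro k _; congr 1; omega
          _ ≤ 1 / (1 - β) := geom_bound hβ0 hβ1 _
    _ = (1 / (1 - β)) ^ 2 * ∑ t ∈ range (T + 1), a t ^ 2 := by
        rw [← mul_sum]; ring

/-- **Total squared momentum bound.** In a real normed vector space, if the momentum has the
closed form `m_t = (1-β) ∑_{s=0}^t β^(t-s) g_s + ∑_{s=0}^t β^(t-s) (δ_{s-1} - δ_s)` with
`δ_{-1} = 0`, then `∑_{t=0}^T ‖m_t‖² ≤ 2 ∑_{t=0}^T ‖g_t‖² + (8/(1-β)²) ∑_{t=0}^T ‖δ_t‖²`. -/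
theorem sum_sq_norm_momentum_le
    {E : Type*} [NormedAddCommGroup E] [NormedSpace ℝ E]
    (β : ℝ) (hβ0 : 0 ≤ β) (hβ1 : β < 1) (T : ℕ)
    (g m δ : ℤ → E) (hδ0 : δ (-1) = 0)
    (hm : ∀ t : ℕ, t ≤ T →
      m t = (1 - β) • ∑ s ∈ range (t + 1), β ^ (t - s) • g (s : ℤ)
        + ∑ s ∈ range (t + 1), β ^ (t - s) • (δ ((s : ℤ) - 1) - δ (s : ℤ))) :
    ∑ t ∈ range (T + 1), ‖m (t : ℤ)‖ ^ 2
      ≤ 2 * ∑ t ∈ range (T + 1), ‖g (t : ℤ)‖ ^ 2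
        + (8 / (1 - β) ^ 2) * ∑ t ∈ range (T + 1), ‖δ (t : ℤ)‖ ^ 2 := by
  have h1 : (0:ℝ) < 1 - β := by linarith
  set a : ℕ → ℝ := fun s => ‖g (s : ℤ)‖ with ha_def
  set b : ℕ → ℝ := fun s => ‖δ ((s : ℤ) - 1) - δ (s : ℤ)‖ with hb_def
  have ha : ∀ s, 0 ≤ a s := fun s => norm_nonneg _
  have hb : ∀ s, 0 ≤ b s := fun s => norm_nonneg _
  set A : ℕ → ℝ := fun t => ∑ s ∈ range (t + 1), β ^ (t - s) * a s with hA_def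
  set B : ℕ → ℝ := fun t => ∑ s ∈ range (t + 1), β ^ (t - s) * b s with hB_def
  have hAnn : ∀ t, 0 ≤ A t := fun t => sum_nonneg fun s _ => by
    exact mul_nonneg (pow_nonneg hβ0 _) (ha s)
  have hBnn : ∀ t, 0 ≤ B t := fun t => sum_nonneg fun s _ => by
    exact mul_nonneg (pow_nonneg hβ0 _) (hb s)
  -- pointwise bound on ‖m t‖
  have hmt : ∀ t : ℕ, t ≤ T → ‖m (t : ℤ)‖ ^ 2 ≤ 2 * (1 - β)^2 * A t ^ 2 + 2 * B t ^ 2 := by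
    intro t ht
    have h2 : ‖m (t : ℤ)‖ ≤ (1 - β) * A t + B t := by
      rw [hm t ht]
      refine le_trans (norm_add_le _ _) (add_le_add ?_ ?_)
      · rw [norm_smul, Real.norm_eq_abs, abs_of_nonneg (le_of_lt h1)]
        apply mul_le_mul_of_nonneg_left _ (le_of_lt h1)
        refine le_trans (norm_sum_le _ _) ?_
        apply le_of_eq
        apply sum_congr rfl; intro s _
        rw [norm_smul, Real.norm_eq_abs, abs_of_nonneg (pow_nonneg hβ0 _)]
      · refine le_trans (norm_sum_le _ _) ?_
        apply le_of_eq
        apply sum_congr rfl; intro s _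
        rw [norm_smul, Real.norm_eq_abs, abs_of_nonneg (pow_nonneg hβ0 _)]
    have hn : (0:ℝ) ≤ ‖m (t:ℤ)‖ := norm_nonneg _
    nlinarith [hAnn t, hBnn t, sq_nonneg ((1-β) * A t - B t)]
  have hA := seq_lemma hβ0 hβ1 T a ha
  have hB := seq_lemma hβ0 hβ1 T b hb
  -- bound on sum of b²
  have hbsum : ∑ t ∈ range (T + 1), b t ^ 2 ≤ 4 * ∑ t ∈ range (T + 1), ‖δ (t : ℤ)‖ ^ 2 := by
    have step : ∀ t, b t ^ 2 ≤ 2 * ‖δ ((t:ℤ) - 1)‖^2 + 2 * ‖δ (t:ℤ)‖^2 := by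
      intro t
      have := norm_sub_le (δ ((t:ℤ) - 1)) (δ (t:ℤ))
      have h0 : (0:ℝ) ≤ b t := hb t
      nlinarith [norm_nonneg (δ ((t:ℤ)-1)), norm_nonneg (δ (t:ℤ)),
        sq_nonneg (‖δ ((t:ℤ)-1)‖ - ‖δ (t:ℤ)‖)]
    have hshift : ∑ t ∈ range (T + 1), ‖δ ((t:ℤ) - 1)‖ ^ 2
        ≤ ∑ t ∈ range (T + 1), ‖δ (t:ℤ)‖ ^ 2 := by
      rw [Finset.sum_range_succ' (fun t => ‖δ ((t:ℤ) - 1)‖ ^ 2) T]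
      have : ∀ i ∈ range T, ‖δ (((i+1:ℕ):ℤ) - 1)‖ ^ 2 = ‖δ (i:ℤ)‖^2 := by
        intro i _; congr 2; push_cast; ring
      rw [sum_congr rfl this]
      simp only [Nat.cast_zero, zero_sub, hδ0, norm_zero]
      rw [zero_pow two_ne_zero, add_zero]
      apply Finset.sum_le_sum_of_subset_of_nonneg (range_subset_range.mpr (Nat.le_succ T))
      intro i _ _; positivity
    calc ∑ t ∈ range (T + 1), b t ^ 2
        ≤ ∑ t ∈ range (T + 1), (2 * ‖δ ((t:ℤ) - 1)‖^2 + 2 * ‖δ (t:ℤ)‖^2) :=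
          sum_le_sum fun t _ => step t
      _ = 2 * ∑ t ∈ range (T+1), ‖δ ((t:ℤ) - 1)‖^2 + 2 * ∑ t ∈ range (T+1), ‖δ (t:ℤ)‖^2 := by
          rw [sum_add_distrib, mul_sum, mul_sum]
      _ ≤ 4 * ∑ t ∈ range (T + 1), ‖δ (t : ℤ)‖ ^ 2 := by linarith
  have key : ∑ t ∈ range (T + 1), ‖m (t : ℤ)‖ ^ 2
      ≤ 2 * (1-β)^2 * ∑ t ∈ range (T+1), A t ^ 2 + 2 * ∑ t ∈ range (T+1), B t ^ 2 := by
    calc ∑ t ∈ range (T + 1), ‖m (t : ℤ)‖ ^ 2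
        ≤ ∑ t ∈ range (T + 1), (2 * (1-β)^2 * A t ^ 2 + 2 * B t ^ 2) :=
          sum_le_sum fun t ht => hmt t (Nat.lt_succ_iff.mp (mem_range.mp ht))
      _ = _ := by rw [sum_add_distrib, mul_sum, mul_sum]
  have hAterm : 2 * (1-β)^2 * ∑ t ∈ range (T+1), A t ^ 2
      ≤ 2 * ∑ t ∈ range (T + 1), a t ^ 2 := by
    have h := mul_le_mul_of_nonneg_left hA (by positivity : (0:ℝ) ≤ 2 * (1-β)^2)
    calc 2 * (1-β)^2 * ∑ t ∈ range (T+1), A t ^ 2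
        ≤ 2 * (1-β)^2 * ((1 / (1 - β)) ^ 2 * ∑ t ∈ range (T + 1), a t ^ 2) := h
      _ = 2 * ∑ t ∈ range (T + 1), a t ^ 2 := by
          field_simp
  have hBterm : 2 * ∑ t ∈ range (T+1), B t ^ 2
      ≤ (8 / (1 - β) ^ 2) * ∑ t ∈ range (T + 1), ‖δ (t : ℤ)‖ ^ 2 := by
    calc 2 * ∑ t ∈ range (T+1), B t ^ 2
        ≤ 2 * ((1 / (1 - β)) ^ 2 * ∑ t ∈ range (T + 1), b t ^ 2) := by
          apply mul_le_mul_of_nonneg_left hB (by norm_num)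
      _ ≤ 2 * ((1 / (1 - β)) ^ 2 * (4 * ∑ t ∈ range (T + 1), ‖δ (t : ℤ)‖ ^ 2)) := by
          apply mul_le_mul_of_nonneg_left _ (by norm_num)
          apply mul_le_mul_of_nonneg_left hbsum (by positivity)
      _ = (8 / (1 - β) ^ 2) * ∑ t ∈ range (T + 1), ‖δ (t : ℤ)‖ ^ 2 := by
          field_simp; ring
  have hfin : ∑ t ∈ range (T + 1), a t ^ 2 = ∑ t ∈ range (T + 1), ‖g (t:ℤ)‖ ^ 2 := rfl
  linarith [key, hAterm, hBterm]
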